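/- Let h₁, h₂ be real numbers and let b₀, c₀, d₀, e₀ : ℝ×ℝ → ℝ be differentiable functions satisfying the four Bäcklund relations in the x-variable: ∂_x((c₀+b₀)/2) = h₁ sin((c₀−b₀)/2), ∂_x((e₀+c₀)/2) = h₂ sin((e₀−c₀)/2), ∂_x((d₀+b₀)/2) = h₂ sin((d₀−b₀)/2), and ∂_x((e₀+d₀)/2) = h₁ sin((e₀−d₀)/2). Then at every point the algebraic relation h₁(sin((c₀−b₀)/2) + sin((e₀−d₀)/2)) = h₂(sin((e₀−c₀)/2) + sin((d₀−b₀)/2)) holds. -/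

import Mathlib

/-- the four `x`-Bäcklund relations imply the algebraic relation
`h₁(sin((c₀−b₀)/2) + sin((e₀−d₀)/2)) = h₂(sin((e₀−c₀)/2) + sin((d₀−b₀)/2))`. -/
theorem superposition_algebraic_relation (h₁ h₂ : ℝ)
    (b₀ c₀ d₀ e₀ : ℝ → ℝ → ℝ)
    (hb : Differentiable ℝ fun p : ℝ × ℝ => b₀ p.1 p.2)
    (hc : Differentiable ℝ fun p : ℝ × ℝ => c₀ p.1 p.2)
    (hd : Differentiable ℝ fun p : ℝ × ℝ => d₀ p.1 p.2)
    (he : Differentiable ℝ fun p : ℝ × ℝ => e₀ p.1 p.2)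
    (r1 : ∀ x t, deriv (fun x' => (c₀ x' t + b₀ x' t) / 2) x
        = h₁ * Real.sin ((c₀ x t - b₀ x t) / 2))
    (r2 : ∀ x t, deriv (fun x' => (e₀ x' t + c₀ x' t) / 2) x
        = h₂ * Real.sin ((e₀ x t - c₀ x t) / 2))
    (r3 : ∀ x t, deriv (fun x' => (d₀ x' t + b₀ x' t) / 2) x
        = h₂ * Real.sin ((d₀ x t - b₀ x t) / 2))
    (r4 : ∀ x t, deriv (fun x' => (e₀ x' t + d₀ x' t) / 2) x
        = h₁ * Real.sin ((e₀ x t - d₀ x t) / 2)) :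
    ∀ x t, h₁ * (Real.sin ((c₀ x t - b₀ x t) / 2) + Real.sin ((e₀ x t - d₀ x t) / 2))
        = h₂ * (Real.sin ((e₀ x t - c₀ x t) / 2) + Real.sin ((d₀ x t - b₀ x t) / 2)) := by
  intro x t
  have hline : Differentiable ℝ (fun x' : ℝ => (x', t)) :=
    differentiable_id.prodMk (differentiable_const t)
  have Db : Differentiable ℝ (fun x' => b₀ x' t) := hb.comp hline
  have Dc : Differentiable ℝ (fun x' => c₀ x' t) := hc.comp hline
  have Dd : Differentiable ℝ (fun x' => d₀ x' t) := hd.comp hline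
  have De : Differentiable ℝ (fun x' => e₀ x' t) := he.comp hline
  have D1 : DifferentiableAt ℝ (fun x' => (c₀ x' t + b₀ x' t) / 2) x :=
    ((Dc.add Db).div_const 2) x
  have D2 : DifferentiableAt ℝ (fun x' => (e₀ x' t + c₀ x' t) / 2) x :=
    ((De.add Dc).div_const 2) x
  have D3 : DifferentiableAt ℝ (fun x' => (d₀ x' t + b₀ x' t) / 2) x :=
    ((Dd.add Db).div_const 2) x
  have D4 : DifferentiableAt ℝ (fun x' => (e₀ x' t + d₀ x' t) / 2) x :=
    ((De.add Dd).div_const 2) x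
  have hfun : (fun x' => (c₀ x' t + b₀ x' t) / 2 + (e₀ x' t + d₀ x' t) / 2)
      = (fun x' => (e₀ x' t + c₀ x' t) / 2 + (d₀ x' t + b₀ x' t) / 2) := by
    funext x'; ring
  have key : deriv (fun x' => (c₀ x' t + b₀ x' t) / 2) x
      + deriv (fun x' => (e₀ x' t + d₀ x' t) / 2) x
      = deriv (fun x' => (e₀ x' t + c₀ x' t) / 2) x
      + deriv (fun x' => (d₀ x' t + b₀ x' t) / 2) x := by
    rw [← deriv_add D1 D4, ← deriv_add D2 D3]; exact congrArg (fun f => deriv f x) hfun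
  rw [r1, r4, r2, r3] at key
  linarith
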